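/- Let Z be a uniformly discrete space of bounded geometry and c a uniformly bounded 0-chain on Z with integer coefficients. Then [c] = 0 in H₀^{uf}(Z; ℤ) if and only if there exist C, r > 0 such that for all finite S ⊆ Z, |Σ_{z∈S} c(z)| ≤ C·|∂_r(S)|. -/

import Mathlib

/-- The closed `r`-neighborhood of a set `A`. -/
def nbhd {Z : Type*} [MetricSpace Z] (r : ℝ) (A : Set Z) : Set Z :=
  {z | ∃ a ∈ A, dist z a ≤ r}

/-- The `r`-boundary of `A`: points outside `A` within distance `r` of `A`. -/
def bdry {Z : Type*} [MetricSpace Z] (r : ℝ) (A : Set Z) : Set Z :=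
  nbhd r A \ A

/-- Uniformly discrete metric space. -/
def UniformlyDiscrete (Z : Type*) [MetricSpace Z] : Prop :=
  ∃ r > (0 : ℝ), ∀ x y : Z, dist x y < r → x = y

/-- Bounded geometry: balls of radius `r` have at most `N_r` points. -/
def BoundedGeometry (Z : Type*) [MetricSpace Z] : Prop :=
  ∀ r : ℝ, ∃ N : ℕ, ∀ x : Z, {y : Z | dist y x ≤ r}.Finite ∧
    {y : Z | dist y x ≤ r}.ncard ≤ N

/-- A uniformly finite 1-chain with coefficients in a normed ring `R`:
coefficients on ordered pairs (edges), uniformly bounded, supported on edges of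
uniformly bounded length, and locally finite at each vertex. -/
def IsUFOneChain {Z : Type*} [MetricSpace Z] {R : Type*} [NormedRing R]
    (b : Z → Z → R) : Prop :=
  (∃ M : ℝ, ∀ z w : Z, ‖b z w‖ ≤ M) ∧
  (∃ l : ℝ, ∀ z w : Z, b z w ≠ 0 → dist z w ≤ l) ∧
  (∀ z : Z, {w : Z | b z w ≠ 0 ∨ b w z ≠ 0}.Finite)

/-- The boundary of a 1-chain at a vertex `z`: net flow into `z`. -/
noncomputable def ufBoundaryAt {Z : Type*} [MetricSpace Z] {R : Type*} [NormedRing R]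
    (b : Z → Z → R) (z : Z) : R :=
  (∑ᶠ w : Z, b w z) - ∑ᶠ w : Z, b z w

/-- A 0-chain `c` represents `0` in `H₀^{uf}(Z; R)` iff it is the boundary of a
uniformly finite 1-chain. -/
def UFBoundsZero {Z : Type*} [MetricSpace Z] {R : Type*} [NormedRing R]
    (c : Z → R) : Prop :=
  ∃ b : Z → Z → R, IsUFOneChain b ∧ ∀ z : Z, c z = ufBoundaryAt b z

/-- Schröder–Bernstein along an edge relation. -/
private theorem csbRel {α : Type*} {β : Type*} (e : α → β → Prop) (f : α → β) (g : β → α)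
    (hf : Function.Injective f) (hg : Function.Injective g)
    (hef : ∀ a, e a (f a)) (heg : ∀ b, e (g b) b) :
    ∃ h : α → β, Function.Bijective h ∧ ∀ a, e a (h a) := by
  classical
  have mono : Monotone (fun X : Set α => (g '' (f '' X)ᶜ)ᶜ) := by
    intro X Y hXY
    exact Set.compl_subset_compl.2
      (Set.image_mono (Set.compl_subset_compl.2 (Set.image_mono hXY)))
  set F : Set α →o Set α := ⟨fun X => (g '' (f '' X)ᶜ)ᶜ, mono⟩ with hF
  set X : Set α := OrderHom.lfp F with hXdef
  have hfix : (g '' (f '' X)ᶜ)ᶜ = X := OrderHom.map_lfp F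
  have hXc : Xᶜ = g '' (f '' X)ᶜ := by
    have h2 := congrArg (·ᶜ) hfix
    simp only [compl_compl] at h2
    exact h2.symm
  have hmem : ∀ a, a ∉ X → ∃ b, b ∉ f '' X ∧ g b = a := by
    intro a ha
    have h2 : a ∈ Xᶜ := ha
    rw [hXc] at h2
    obtain ⟨b, hb, hgb⟩ := h2
    exact ⟨b, hb, hgb⟩
  choose bb hbb1 hbb2 using hmem
  refine ⟨fun a => if ha : a ∈ X then f a else bb a ha, ⟨?_, ?_⟩, ?_⟩
  · intro a1 a2 h12
    dsimp only at h12
    split_ifs at h12 with h1 h2 h2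
    · exact hf h12
    · exact absurd ⟨a1, h1, h12⟩ (hbb1 a2 h2)
    · exact absurd ⟨a2, h2, h12.symm⟩ (hbb1 a1 h1)
    · rw [← hbb2 a1 h1, ← hbb2 a2 h2, h12]
  · intro b
    by_cases hb : b ∈ f '' X
    · obtain ⟨a, ha, rfl⟩ := hb
      exact ⟨a, dif_pos ha⟩
    · have hgb : g b ∉ X := by
        intro hmem'
        rw [← hfix] at hmem'
        exact hmem' ⟨b, hb, rfl⟩
      refine ⟨g b, ?_⟩
      have h3 := hbb2 (g b) hgb
      have hb' : bb (g b) hgb = b := hg h3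
      simp only [dif_neg hgb, hb']
  · intro a
    dsimp only
    split_ifs with ha
    · exact hef a
    · have h4 := heg (bb a ha)
      rwa [hbb2 a ha] at h4

private theorem ball_finite {Z : Type*} [MetricSpace Z] (hbg : BoundedGeometry Z) (r : ℝ)
    (x : Z) : {y : Z | dist y x ≤ r}.Finite := ((hbg r).choose_spec x).1

private theorem nbhd_finite {Z : Type*} [MetricSpace Z] (hbg : BoundedGeometry Z) (r : ℝ)
    (S : Finset Z) : (nbhd r (S : Set Z)).Finite := by
  have h : nbhd r (S : Set Z) = ⋃ a ∈ (S : Set Z), {z : Z | dist z a ≤ r} := by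
    ext z; simp [nbhd]
  rw [h]
  exact Set.Finite.biUnion S.finite_toSet (fun a _ => ball_finite hbg r a)

private theorem bdry_finite {Z : Type*} [MetricSpace Z] (hbg : BoundedGeometry Z) (r : ℝ)
    (S : Finset Z) : (bdry r (S : Set Z)).Finite :=
  (nbhd_finite hbg r S).subset Set.diff_subset

private theorem sigma_fiber_finite {Z : Type*} (n : Z → ℕ) {F : Set Z} (hF : F.Finite) :
    {p : (z : Z) × Fin (n z) | p.1 ∈ F}.Finite := by
  have h : {p : (z : Z) × Fin (n z) | p.1 ∈ F} ⊆ ⋃ w ∈ F, Set.range (Sigma.mk w) := by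
    intro p hp
    exact Set.mem_biUnion hp ⟨p.2, rfl⟩
  exact (hF.biUnion fun w _ => Set.finite_range _).subset h

private theorem sum_ncard_fiber {Z : Type*} {γ : Type*} [Fintype γ] (f : γ → Z) (F : Finset Z)
    (hf : ∀ i, f i ∈ F) : ∑ w ∈ F, ({i | f i = w}).ncard = Fintype.card γ := by
  classical
  have h1 : ∀ w, ({i | f i = w}).ncard = (Finset.univ.filter fun i => f i = w).card := by
    intro w
    rw [← Set.ncard_coe_finset]
    congr 1
    ext i; simp
  simp_rw [h1]
  rw [← Finset.card_univ]
  exact (Finset.card_eq_sum_card_fiberwise (fun i _ => hf i)).symm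

private theorem sigma_sum_fiber {Z : Type*} (n : Z → ℕ) (P : Set ((z : Z) × Fin (n z)))
    (hP : P.Finite) (F : Finset Z) (hPF : ∀ p ∈ P, p.1 ∈ F) :
    ∑ w ∈ F, ({i : Fin (n w) | ⟨w, i⟩ ∈ P}).ncard = P.ncard := by
  classical
  rw [Set.ncard_eq_toFinset_card P hP,
    Finset.card_eq_sum_card_fiberwise (f := Sigma.fst) (t := F)
      (fun p hp => hPF p (hP.mem_toFinset.1 hp))]
  refine Finset.sum_congr rfl fun w _ => ?_
  rw [← Set.ncard_coe_finset]
  have himg : (↑(hP.toFinset.filter fun p => p.1 = w) : Set _) =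
      (Set.image (@Sigma.mk Z (fun z => Fin (n z)) w) {i : Fin (n w) | Sigma.mk w i ∈ P}) := by
    ext p
    simp only [Finset.coe_filter, Set.Finite.mem_toFinset, Set.mem_setOf_eq, Set.mem_image]
    constructor
    · rintro ⟨hp, hw⟩
      subst hw
      exact ⟨p.2, hp, rfl⟩
    · rintro ⟨i, hi, rfl⟩
      exact ⟨hi, rfl⟩
  rw [himg, Set.ncard_image_of_injective _ sigma_mk_injective]


private theorem ball_finite' {Z : Type*} [MetricSpace Z] (hbg : BoundedGeometry Z) (r : ℝ)
    (x : Z) : {y : Z | dist y x ≤ r}.Finite := ((hbg r).choose_spec x).1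

private theorem nbhd_finite' {Z : Type*} [MetricSpace Z] (hbg : BoundedGeometry Z) (r : ℝ)
    (S : Finset Z) : (nbhd r (S : Set Z)).Finite := by
  have h : nbhd r (S : Set Z) = ⋃ a ∈ (S : Set Z), {z : Z | dist z a ≤ r} := by
    ext z; simp [nbhd]
  rw [h]
  exact Set.Finite.biUnion S.finite_toSet (fun a _ => ball_finite' hbg r a)

private theorem bdry_finite' {Z : Type*} [MetricSpace Z] (hbg : BoundedGeometry Z) (r : ℝ)
    (S : Finset Z) : (bdry r (S : Set Z)).Finite :=
  (nbhd_finite' hbg r S).subset Set.diff_subset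

private theorem fwd {Z : Type*} [MetricSpace Z] (hbg : BoundedGeometry Z)
    (c : Z → ℤ) (h : UFBoundsZero c) :
    ∃ C r : ℝ, 0 < C ∧ 0 < r ∧ ∀ S : Finset Z,
      (|∑ z ∈ S, c z| : ℝ) ≤ C * ((bdry r (S : Set Z)).ncard : ℝ) := by
  classical
  obtain ⟨b, ⟨⟨M, hM⟩, ⟨l, hl⟩, hfin⟩, hcb⟩ := h
  set r : ℝ := max l 1 with hr
  have hr0 : 0 < r := lt_max_of_lt_right one_pos
  obtain ⟨N, hN⟩ := hbg r
  set M' : ℝ := max M 0 with hM'def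
  have hM' : ∀ z w, ‖b z w‖ ≤ M' := fun z w => (hM z w).trans (le_max_left _ _)
  have hM'0 : 0 ≤ M' := le_max_right _ _
  have hlr : ∀ z w : Z, b z w ≠ 0 → dist z w ≤ r := fun z w h' => (hl z w h').trans (le_max_left _ _)
  refine ⟨2 * M' * N + 1, r, by positivity, hr0, fun S => ?_⟩
  set T : Finset Z := S ∪ S.biUnion (fun z => (hfin z).toFinset) with hT
  have hsubST : S ⊆ T := Finset.subset_union_left
  have hsupIn : ∀ z ∈ S, (Function.support fun w => b w z) ⊆ (T : Set Z) := by
    intro z hz w hw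
    simp only [Function.mem_support] at hw
    have h2 : w ∈ (hfin z).toFinset := (hfin z).mem_toFinset.2 (Or.inr hw)
    exact Finset.mem_coe.2 (Finset.mem_union_right _ (Finset.mem_biUnion.2 ⟨z, hz, h2⟩))
  have hsupOut : ∀ z ∈ S, (Function.support fun w => b z w) ⊆ (T : Set Z) := by
    intro z hz w hw
    simp only [Function.mem_support] at hw
    have h2 : w ∈ (hfin z).toFinset := (hfin z).mem_toFinset.2 (Or.inl hw)
    exact Finset.mem_coe.2 (Finset.mem_union_right _ (Finset.mem_biUnion.2 ⟨z, hz, h2⟩))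
  have key : ∑ z ∈ S, c z = ∑ w ∈ T \ S, ∑ z ∈ S, (b w z - b z w) := by
    have h1 : ∑ z ∈ S, c z = ∑ z ∈ S, ∑ w ∈ T, (b w z - b z w) := by
      refine Finset.sum_congr rfl fun z hz => ?_
      rw [hcb z, ufBoundaryAt,
        finsum_eq_finset_sum_of_support_subset _ (hsupIn z hz),
        finsum_eq_finset_sum_of_support_subset _ (hsupOut z hz),
        ← Finset.sum_sub_distrib]
    rw [h1, Finset.sum_comm, ← Finset.sum_sdiff hsubST]
    have hzero : ∑ w ∈ S, ∑ z ∈ S, (b w z - b z w) = 0 := by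
      have hcomm : ∑ w ∈ S, ∑ z ∈ S, b w z = ∑ w ∈ S, ∑ z ∈ S, b z w := Finset.sum_comm
      simp only [Finset.sum_sub_distrib]
      rw [hcomm]
      ring
    rw [hzero, add_zero]
  set T' : Finset Z := (T \ S).filter (fun w => w ∈ bdry r (S : Set Z)) with hT'
  have key2 : ∑ z ∈ S, c z = ∑ w ∈ T', ∑ z ∈ S, (b w z - b z w) := by
    rw [key]
    refine (Finset.sum_subset (Finset.filter_subset _ _) ?_).symm
    intro w hw hw'
    have hwb : w ∉ bdry r (S : Set Z) := fun hb => hw' (Finset.mem_filter.2 ⟨hw, hb⟩)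
    refine Finset.sum_eq_zero fun z hz => ?_
    have hwS : w ∉ S := (Finset.mem_sdiff.1 hw).2
    have hbz : b w z = 0 := by
      by_contra h0
      exact hwb ⟨⟨z, hz, (hlr w z h0)⟩, hwS⟩
    have hbz' : b z w = 0 := by
      by_contra h0
      exact hwb ⟨⟨z, hz, by rw [dist_comm]; exact hlr z w h0⟩, hwS⟩
    rw [hbz, hbz', sub_zero]
  -- now the bound
  have hbdryfin : (bdry r (S : Set Z)).Finite := bdry_finite' hbg r S
  have hT'card : (T'.card : ℝ) ≤ ((bdry r (S : Set Z)).ncard : ℝ) := by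
    have h2 : (T' : Set Z) ⊆ bdry r (S : Set Z) := by
      intro w hw
      exact (Finset.mem_filter.1 hw).2
    have := Set.ncard_le_ncard h2 hbdryfin
    rw [Set.ncard_coe_finset] at this
    exact_mod_cast this
  have hinner : ∀ w : Z, ‖∑ z ∈ S, (b w z - b z w)‖ ≤ 2 * M' * N := by
    intro w
    set S' : Finset Z := S.filter (fun z => dist z w ≤ r) with hS'
    have hsum : ∑ z ∈ S, (b w z - b z w) = ∑ z ∈ S', (b w z - b z w) := by
      refine (Finset.sum_subset (Finset.filter_subset _ _) ?_).symm
      intro z hz hz'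
      have hd : ¬ dist z w ≤ r := fun hd => hz' (Finset.mem_filter.2 ⟨hz, hd⟩)
      have h1 : b w z = 0 := by
        by_contra h0
        exact hd (by rw [dist_comm]; exact hlr w z h0)
      have h2 : b z w = 0 := by
        by_contra h0
        exact hd (hlr z w h0)
      rw [h1, h2, sub_zero]
    have hcard : (S'.card : ℝ) ≤ N := by
      have h2 : (S' : Set Z) ⊆ {y : Z | dist y w ≤ r} := by
        intro z hz
        exact (Finset.mem_filter.1 hz).2
      have h3 := Set.ncard_le_ncard h2 (hN w).1
      rw [Set.ncard_coe_finset] at h3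
      exact_mod_cast h3.trans (hN w).2
    calc ‖∑ z ∈ S, (b w z - b z w)‖ = ‖∑ z ∈ S', (b w z - b z w)‖ := by rw [hsum]
      _ ≤ ∑ z ∈ S', ‖b w z - b z w‖ := norm_sum_le _ _
      _ ≤ ∑ _z ∈ S', (2 * M') := by
          refine Finset.sum_le_sum fun z _ => ?_
          calc ‖b w z - b z w‖ ≤ ‖b w z‖ + ‖b z w‖ := norm_sub_le _ _
            _ ≤ 2 * M' := by linarith [hM' w z, hM' z w]
      _ = S'.card * (2 * M') := by rw [Finset.sum_const, nsmul_eq_mul]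
      _ ≤ N * (2 * M') := by
          apply mul_le_mul_of_nonneg_right hcard
          linarith
      _ = 2 * M' * N := by ring
  have habs : (|∑ z ∈ S, c z| : ℝ) = ‖∑ z ∈ S, c z‖ := by
    rw [Int.norm_eq_abs]
    exact_mod_cast rfl
  calc (|∑ z ∈ S, c z| : ℝ) = ‖∑ w ∈ T', ∑ z ∈ S, (b w z - b z w)‖ := by rw [habs, key2]
    _ ≤ ∑ w ∈ T', ‖∑ z ∈ S, (b w z - b z w)‖ := norm_sum_le _ _
    _ ≤ ∑ _w ∈ T', (2 * M' * N) := Finset.sum_le_sum fun w _ => hinner w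
    _ = T'.card * (2 * M' * N) := by rw [Finset.sum_const, nsmul_eq_mul]
    _ ≤ ((bdry r (S : Set Z)).ncard : ℝ) * (2 * M' * N) := by
        apply mul_le_mul_of_nonneg_right hT'card
        positivity
    _ ≤ (2 * M' * N + 1) * ((bdry r (S : Set Z)).ncard : ℝ) := by
        rw [mul_comm]
        apply mul_le_mul_of_nonneg_right _ (by positivity)
        linarith


private theorem hall_flow {Z : Type*} [MetricSpace Z] (hbg : BoundedGeometry Z) (r : ℝ)
    (hr : 0 < r) (a bf : Z → ℕ) (D : ℕ) (hbfD : ∀ z, D ≤ bf z)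
    (key : ∀ S₀ : Finset Z, ∑ z ∈ S₀, (a z : ℤ) ≤
      ∑ z ∈ S₀, (bf z : ℤ) + (D : ℤ) * ((bdry r (S₀ : Set Z)).ncard : ℤ)) :
    ∃ f : ((z : Z) × Fin (a z)) → ((w : Z) × Fin (bf w)),
      Function.Injective f ∧ ∀ p, dist (f p).1 p.1 ≤ r := by
  classical
  have hfin : ∀ p : (z : Z) × Fin (a z),
      {q : (w : Z) × Fin (bf w) | dist q.1 p.1 ≤ r}.Finite := fun p =>
    sigma_fiber_finite bf (ball_finite' hbg r p.1)
  set t : ((z : Z) × Fin (a z)) → Finset ((w : Z) × Fin (bf w)) :=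
    fun p => (hfin p).toFinset with ht
  have halls : ∀ s : Finset ((z : Z) × Fin (a z)), s.card ≤ (s.biUnion t).card := by
    intro s
    set S₀ := s.image Sigma.fst with hS₀
    have h1 : s.card ≤ ∑ z ∈ S₀, a z := by
      calc s.card ≤ (S₀.sigma fun z => (Finset.univ : Finset (Fin (a z)))).card :=
            Finset.card_le_card (fun p hp => Finset.mem_sigma.2
              ⟨Finset.mem_image_of_mem _ hp, Finset.mem_univ _⟩)
        _ = ∑ z ∈ S₀, a z := by rw [Finset.card_sigma]; simp
    have hnf : (nbhd r (S₀ : Set Z)).Finite := nbhd_finite' hbg r S₀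
    set NB := hnf.toFinset with hNB
    have h2 : NB.sigma (fun w => (Finset.univ : Finset (Fin (bf w)))) ⊆ s.biUnion t := by
      intro q hq
      rw [Finset.mem_sigma] at hq
      have hq1 : q.1 ∈ nbhd r (S₀ : Set Z) := hnf.mem_toFinset.1 hq.1
      obtain ⟨z0, hz0, hdist⟩ := hq1
      obtain ⟨p, hp, rfl⟩ := Finset.mem_image.1 hz0
      exact Finset.mem_biUnion.2 ⟨p, hp, (hfin p).mem_toFinset.2 hdist⟩
    have h3 : ∑ w ∈ NB, bf w ≤ (s.biUnion t).card := by
      calc ∑ w ∈ NB, bf w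
          = (NB.sigma fun w => (Finset.univ : Finset (Fin (bf w)))).card := by
            rw [Finset.card_sigma]; simp
        _ ≤ _ := Finset.card_le_card h2
    have hS₀NB : S₀ ⊆ NB := by
      intro z hz
      exact hnf.mem_toFinset.2 ⟨z, Finset.mem_coe.2 hz, by simp [hr.le]⟩
    have h4 : ∑ z ∈ S₀, (a z : ℤ) ≤ ∑ w ∈ NB, (bf w : ℤ) := by
      have hb : ((bdry r (S₀ : Set Z)).ncard : ℤ) = ((NB \ S₀).card : ℤ) := by
        have hset : bdry r (S₀ : Set Z) = ↑(NB \ S₀) := by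
          rw [Finset.coe_sdiff, hNB, hnf.coe_toFinset]
          rfl
        rw [hset, Set.ncard_coe_finset]
      have h5 : ∑ w ∈ NB, (bf w : ℤ) = ∑ z ∈ S₀, (bf z : ℤ) + ∑ w ∈ NB \ S₀, (bf w : ℤ) := by
        rw [← Finset.sum_sdiff hS₀NB]
        ring
      have h6 : (D : ℤ) * ((NB \ S₀).card : ℤ) ≤ ∑ w ∈ NB \ S₀, (bf w : ℤ) := by
        calc (D : ℤ) * ((NB \ S₀).card : ℤ) = ∑ _w ∈ NB \ S₀, (D : ℤ) := by
              rw [Finset.sum_const, nsmul_eq_mul]; ring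
          _ ≤ _ := Finset.sum_le_sum fun w _ => by exact_mod_cast hbfD w
      have h7 := key S₀
      rw [hb] at h7
      linarith
    have h8 : (s.card : ℤ) ≤ ∑ w ∈ NB, (bf w : ℤ) := by
      refine le_trans ?_ h4
      exact_mod_cast h1
    have h9 : s.card ≤ ∑ w ∈ NB, bf w := by
      have : ((∑ w ∈ NB, bf w : ℕ) : ℤ) = ∑ w ∈ NB, (bf w : ℤ) := by push_cast; rfl
      rw [← this] at h8
      exact_mod_cast h8
    exact h9.trans h3
  obtain ⟨f, hfinj, hft⟩ := (Finset.all_card_le_biUnion_card_iff_exists_injective t).1 halls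
  refine ⟨f, hfinj, fun p => ?_⟩
  have h10 := hft p
  rw [ht] at h10
  exact (hfin p).mem_toFinset.1 h10


private theorem bwd {Z : Type*} [MetricSpace Z] (hbg : BoundedGeometry Z)
    (c : Z → ℤ) (hc : ∃ K : ℤ, ∀ z, |c z| ≤ K) (C r : ℝ) (hr : 0 < r)
    (hS : ∀ S : Finset Z, (|∑ z ∈ S, c z| : ℝ) ≤ C * ((bdry r (S : Set Z)).ncard : ℝ)) :
    UFBoundsZero c := by
  classical
  obtain ⟨K, hK⟩ := hc
  set D : ℕ := ⌈C⌉₊ + 1 with hD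
  have hCD : C ≤ (D : ℝ) := by
    calc C ≤ (⌈C⌉₊ : ℝ) := Nat.le_ceil C
      _ ≤ (D : ℝ) := by exact_mod_cast Nat.le_succ _
  have key0 : ∀ S₀ : Finset Z, |∑ z ∈ S₀, c z| ≤ (D : ℤ) * ((bdry r (S₀ : Set Z)).ncard : ℤ) := by
    intro S₀
    have h1 := hS S₀
    have h2 : (|∑ z ∈ S₀, c z| : ℝ) ≤ ((D : ℝ)) * ((bdry r (S₀ : Set Z)).ncard : ℝ) := by
      refine h1.trans (mul_le_mul_of_nonneg_right hCD (by positivity))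
    exact_mod_cast h2
  set af : Z → ℕ := fun z => (c z).toNat + D with haf
  set bff : Z → ℕ := fun z => (-(c z)).toNat + D with hbff
  have hdiff : ∀ z, (af z : ℤ) = (bff z : ℤ) + c z := by
    intro z
    simp only [haf, hbff]
    push_cast
    omega
  have hkeyA : ∀ S₀ : Finset Z, ∑ z ∈ S₀, (af z : ℤ) ≤
      ∑ z ∈ S₀, (bff z : ℤ) + (D : ℤ) * ((bdry r (S₀ : Set Z)).ncard : ℤ) := by
    intro S₀
    have h1 : ∑ z ∈ S₀, (af z : ℤ) = ∑ z ∈ S₀, (bff z : ℤ) + ∑ z ∈ S₀, c z := by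
      rw [← Finset.sum_add_distrib]
      exact Finset.sum_congr rfl fun z _ => hdiff z
    have h2 := key0 S₀
    have h3 : ∑ z ∈ S₀, c z ≤ |∑ z ∈ S₀, c z| := le_abs_self _
    linarith
  have hkeyB : ∀ S₀ : Finset Z, ∑ z ∈ S₀, (bff z : ℤ) ≤
      ∑ z ∈ S₀, (af z : ℤ) + (D : ℤ) * ((bdry r (S₀ : Set Z)).ncard : ℤ) := by
    intro S₀
    have h1 : ∑ z ∈ S₀, (af z : ℤ) = ∑ z ∈ S₀, (bff z : ℤ) + ∑ z ∈ S₀, c z := by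
      rw [← Finset.sum_add_distrib]
      exact Finset.sum_congr rfl fun z _ => hdiff z
    have h2 := key0 S₀
    have h3 : -(∑ z ∈ S₀, c z) ≤ |∑ z ∈ S₀, c z| := neg_le_abs _
    linarith
  obtain ⟨f, hfinj, hfd⟩ := hall_flow hbg r hr af bff D (fun z => Nat.le_add_left D _) hkeyA
  obtain ⟨g, hginj, hgd⟩ := hall_flow hbg r hr bff af D (fun z => Nat.le_add_left D _) hkeyB
  obtain ⟨h, hbij, hedge⟩ := csbRel (fun p q => dist p.1 q.1 ≤ r) f g hfinj hginj
    (fun p => by show dist p.1 (f p).1 ≤ r; rw [dist_comm]; exact hfd p)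
    (fun q => by show dist (g q).1 q.1 ≤ r; exact hgd q)
  set m : Z → Z → ℕ := fun z w => {i : Fin (af z) | (h ⟨z, i⟩).1 = w}.ncard with hm
  have hmle : ∀ z w, m z w ≤ af z := by
    intro z w
    have h1 := Set.ncard_le_ncard (Set.subset_univ {i : Fin (af z) | (h ⟨z, i⟩).1 = w})
      Set.finite_univ
    rwa [Set.ncard_univ, Nat.card_eq_fintype_card, Fintype.card_fin] at h1
  have hmne : ∀ z w, m z w ≠ 0 → dist z w ≤ r := by
    intro z w h0
    obtain ⟨i, hi⟩ := Set.nonempty_of_ncard_ne_zero h0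
    rw [Set.mem_setOf_eq] at hi
    have h1 := hedge ⟨z, i⟩
    rw [hi] at h1
    exact h1
  refine ⟨fun z w => ((m w z : ℕ) : ℤ), ⟨⟨(K.toNat + D : ℕ), ?_⟩, ⟨r, ?_⟩, ?_⟩, ?_⟩
  · -- uniform bound
    intro z w
    have h1 : m w z ≤ K.toNat + D := by
      refine (hmle w z).trans ?_
      simp only [haf]
      have h5 : c w ≤ K := (abs_le.1 (hK w)).2
      omega
    calc ‖((m w z : ℕ) : ℤ)‖ = ((m w z : ℕ) : ℝ) := by
          rw [Int.norm_eq_abs]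
          rw [abs_of_nonneg (by positivity)]
          push_cast
          rfl
      _ ≤ ((K.toNat + D : ℕ) : ℝ) := by exact_mod_cast h1
  · -- bounded length
    intro z w h0
    replace h0 : m w z ≠ 0 := by simpa using h0
    rw [dist_comm]
    exact hmne w z h0
  · -- local finiteness
    intro z
    refine (ball_finite' hbg r z).subset ?_
    intro w hw
    simp only [ne_eq, Nat.cast_eq_zero, Set.mem_setOf_eq] at hw
    show dist w z ≤ r
    rcases hw with hw | hw
    · exact hmne w z hw
    · have h9 := hmne z w hw
      rwa [dist_comm] at h9
  · -- boundary condition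
    intro z
    have hFb := ball_finite' hbg r z
    set Fb := hFb.toFinset with hFbdef
    have hmemFb : ∀ w : Z, dist w z ≤ r → w ∈ Fb := fun w hw => hFb.mem_toFinset.2 hw
    have hin : (Function.support fun w => ((m z w : ℕ) : ℤ)) ⊆ (Fb : Set Z) := by
      intro w hw
      simp only [Function.mem_support, ne_eq, Nat.cast_eq_zero] at hw
      have h1 := hmne z w hw
      exact Finset.mem_coe.2 (hmemFb w (by rwa [dist_comm]))
    have hin2 : (Function.support fun w => ((m w z : ℕ) : ℤ)) ⊆ (Fb : Set Z) := by
      intro w hw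
      simp only [Function.mem_support, ne_eq, Nat.cast_eq_zero] at hw
      exact Finset.mem_coe.2 (hmemFb w (hmne w z hw))
    have e1 : ∑ᶠ w, ((m z w : ℕ) : ℤ) = (af z : ℤ) := by
      rw [finsum_eq_finset_sum_of_support_subset _ hin]
      have h2 : ∑ w ∈ Fb, m z w = af z := by
        have h3 := sum_ncard_fiber (fun i : Fin (af z) => (h ⟨z, i⟩).1) Fb
          (fun i => hmemFb _ (by rw [dist_comm]; exact hedge ⟨z, i⟩))
        simpa [hm] using h3
      calc ∑ w ∈ Fb, ((m z w : ℕ) : ℤ) = ((∑ w ∈ Fb, m z w : ℕ) : ℤ) := by push_cast; rfl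
        _ = (af z : ℤ) := by rw [h2]
    have e2 : ∑ᶠ w, ((m w z : ℕ) : ℤ) = (bff z : ℤ) := by
      rw [finsum_eq_finset_sum_of_support_subset _ hin2]
      set Pset : Set ((z' : Z) × Fin (af z')) := {p | (h p).1 = z} with hPset
      have hPdist : ∀ p ∈ Pset, dist p.1 z ≤ r := by
        intro p hp
        have h1 := hedge p
        rw [hPset, Set.mem_setOf_eq] at hp
        rwa [hp] at h1
      have hPfin : Pset.Finite := by
        refine (sigma_fiber_finite af (ball_finite' hbg r z)).subset ?_
        intro p hp
        exact hPdist p hp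
      have h3 := sigma_sum_fiber af Pset hPfin Fb (fun p hp => hmemFb _ (hPdist p hp))
      have h4 : Pset.ncard = bff z := by
        have himg : h '' Pset = {q : (w : Z) × Fin (bff w) | q.1 = z} := by
          ext q
          constructor
          · rintro ⟨p, hp, rfl⟩
            exact hp
          · intro hq
            obtain ⟨p, rfl⟩ := hbij.2 q
            exact ⟨p, hq, rfl⟩
        have h5 : {q : (w : Z) × Fin (bff w) | q.1 = z} = Set.range (Sigma.mk z) := by
          ext q
          constructor
          · intro hq
            rcases q with ⟨w, j⟩
            have : w = z := hq
            subst this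
            exact ⟨j, rfl⟩
          · rintro ⟨j, rfl⟩
            rfl
        rw [← Set.ncard_image_of_injective Pset hbij.1, himg, h5, ← Set.image_univ,
          Set.ncard_image_of_injective _ sigma_mk_injective, Set.ncard_univ,
          Nat.card_eq_fintype_card, Fintype.card_fin]
      have h6 : ∑ w ∈ Fb, m w z = bff z := by
        rw [← h4, ← h3]
        rfl
      calc ∑ w ∈ Fb, ((m w z : ℕ) : ℤ) = ((∑ w ∈ Fb, m w z : ℕ) : ℤ) := by push_cast; rfl
        _ = (bff z : ℤ) := by rw [h6]
    rw [ufBoundaryAt]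
    rw [e1, e2]
    linarith [hdiff z]


/-- Theorem C: a uniformly bounded integer 0-chain `c` vanishes in `H₀^{uf}(Z; ℤ)`
iff there are `C, r > 0` with `|Σ_S c| ≤ C·|∂_r S|` for all finite `S ⊆ Z`. -/
theorem stmt11 {Z : Type*} [MetricSpace Z]
    (hud : UniformlyDiscrete Z) (hbg : BoundedGeometry Z)
    (c : Z → ℤ) (hc : ∃ K : ℤ, ∀ z, |c z| ≤ K) :
    UFBoundsZero c ↔ ∃ C r : ℝ, 0 < C ∧ 0 < r ∧ ∀ S : Finset Z,
      (|∑ z ∈ S, c z| : ℝ) ≤ C * ((bdry r (S : Set Z)).ncard : ℝ) := by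
  constructor
  · exact fun h => fwd hbg c h
  · rintro ⟨C, r, hC, hr, hS⟩
    exact bwd hbg c hc C r hr hS
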